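/- Let S be the numerical semigroup generated by coprime p, q with 1 < p < q, and suppose S satisfies #(S ∩ [0, jd+1)) = (j+1)(j+2)/2 for all 0 ≤ j ≤ d-2, where (p-1)(q-1) = (d-1)(d-2). Then taking j = 1, the number of elements of S in [0, d+1) equals 3; in particular p ≥ d/3 (the multiplicity bound of Matsuoka–Sakai). -/
import Mathlib


open scoped Classical in
theorem multiplicity_bound_matsuoka_sakai
    (p q d : ℕ) (hcop : Nat.Coprime p q) (hp : 1 < p) (hpq : p < q) (hd : 3 ≤ d)
    (hgenus : (p - 1) * (q - 1) = (d - 1) * (d - 2))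
    (hcount : ∀ j : ℕ, j ≤ d - 2 →
      ((Finset.range (j * d + 1)).filter
          (fun n => ∃ a b : ℕ, n = a * p + b * q)).card = (j + 1) * (j + 2) / 2) :
    ((Finset.range (d + 1)).filter
        (fun n => ∃ a b : ℕ, n = a * p + b * q)).card = 3 ∧ d ≤ 3 * p := by
  have h1 := hcount 1 (by omega)
  rw [one_mul] at h1
  norm_num at h1
  refine ⟨h1, ?_⟩
  by_contra hlt
  push_neg at hlt
  have hsub : ({0, p, 2 * p, 3 * p} : Finset ℕ) ⊆
      (Finset.range (d + 1)).filter (fun n => ∃ a b : ℕ, n = a * p + b * q) := by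
    intro x hx
    simp only [Finset.mem_insert, Finset.mem_singleton] at hx
    rw [Finset.mem_filter, Finset.mem_range]
    rcases hx with h | h | h | h <;> subst h
    · exact ⟨by omega, 0, 0, by ring⟩
    · exact ⟨by omega, 1, 0, by ring⟩
    · exact ⟨by omega, 2, 0, by ring⟩
    · exact ⟨by omega, 3, 0, by ring⟩
  have hcard : ({0, p, 2 * p, 3 * p} : Finset ℕ).card = 4 := by
    rw [Finset.card_insert_of_notMem (by simp; omega),
        Finset.card_insert_of_notMem (by simp; omega),
        Finset.card_insert_of_notMem (by simp; omega), Finset.card_singleton]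
  have := Finset.card_le_card hsub
  omega
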